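/- Consider the non-exhaustive sampling variance formula: if Y_{it} = b + a_i + g_t + w_{it} with the standard uncorrelated mean-zero two-way decomposition and W ∈ {0,1}^{N×T} is a fixed (non-random) selection matrix with at least one 1, then Var(Ȳ_{NT,W}) = (1/(NT p̄))·[T p̄ σ_a² · (1/N)∑_i (p_i/p̄)² + N p̄ σ_g² · (1/T)∑_t (p_t/p̄)² + σ_w²], where Ȳ_{NT,W} := (∑_{i,t}W_{it})^{-1}∑_{i,t}W_{it}Y_{it}, p_i := (1/T)∑_t W_{it}, p_t := (1/N)∑_i W_{it}, p̄ := (1/(NT))∑_{i,t}W_{it}. -/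

import Mathlib

open MeasureTheory ProbabilityTheory
open scoped BigOperators ENNReal

lemma integrable_mul_of_memL2 {Ω : Type*} [MeasurableSpace Ω] {μ : Measure Ω} {f g : Ω → ℝ}
    (hf : MemLp f 2 μ) (hg : MemLp g 2 μ) : Integrable (fun ω => f ω * g ω) μ := by
  have h : MemLp (f • g) 1 μ := hg.smul hf (hpqr := ⟨by rw [ENNReal.inv_two_add_inv_two, inv_one]⟩)
  simpa [smul_eq_mul, Pi.mul_def] using memLp_one_iff_integrable.mp h

lemma integral_sum_mul_sum {Ω ι κ : Type*} [MeasurableSpace Ω] {μ : Measure Ω}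
    [Fintype ι] [Fintype κ]
    (c : ι → ℝ) (d : κ → ℝ) (f : ι → Ω → ℝ) (h : κ → Ω → ℝ)
    (hf : ∀ i, MemLp (f i) 2 μ) (hh : ∀ j, MemLp (h j) 2 μ) :
    ∫ ω, (∑ i, c i * f i ω) * (∑ j, d j * h j ω) ∂μ
      = ∑ i, ∑ j, c i * d j * ∫ ω, f i ω * h j ω ∂μ := by
  have h1 : ∀ ω, (∑ i, c i * f i ω) * (∑ j, d j * h j ω)
      = ∑ i, ∑ j, c i * d j * (f i ω * h j ω) := by
    intro ω
    rw [Finset.sum_mul_sum]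
    exact Finset.sum_congr rfl fun i _ => Finset.sum_congr rfl fun j _ => by ring
  simp_rw [h1]
  rw [integral_finset_sum _ (fun i _ => integrable_finset_sum _
    (fun j _ => (integrable_mul_of_memL2 (hf i) (hh j)).const_mul _))]
  refine Finset.sum_congr rfl fun i _ => ?_
  rw [integral_finset_sum _ (fun j _ => (integrable_mul_of_memL2 (hf i) (hh j)).const_mul _)]
  exact Finset.sum_congr rfl fun j _ => integral_const_mul _ _

lemma variance_const_add {Ω : Type*} [MeasurableSpace Ω] {μ : Measure Ω}
    [IsProbabilityMeasure μ] {Z : Ω → ℝ} (hZ : MemLp Z 2 μ) (c : ℝ) :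
    variance (fun ω => c + Z ω) μ = variance Z μ := by
  have h1 : MemLp (fun ω => c + Z ω) 2 μ := (memLp_const c).add hZ
  rw [variance_eq_sub h1, variance_eq_sub hZ]
  simp only [Pi.pow_apply]
  have e0 : ∫ ω, (c + Z ω) ∂μ = c + ∫ ω, Z ω ∂μ := by
    rw [integral_add (integrable_const c) (hZ.integrable one_le_two)]; simp
  have e1 : ∫ ω, (c + Z ω) ^ 2 ∂μ
      = c ^ 2 + 2 * c * (∫ ω, Z ω ∂μ) + ∫ ω, Z ω ^ 2 ∂μ := by
    have hpt : ∀ ω, (c + Z ω) ^ 2 = c ^ 2 + (2 * c * Z ω + Z ω ^ 2) := by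
      intro ω; ring
    simp_rw [hpt]
    have H2 : Integrable (fun ω => 2 * c * Z ω) μ := (hZ.integrable one_le_two).const_mul _
    have H : Integrable (fun ω => 2 * c * Z ω + Z ω ^ 2) μ := H2.add hZ.integrable_sq
    rw [integral_add (integrable_const _) H, integral_add H2 hZ.integrable_sq,
      integral_const_mul, integral_const]
    simp only [probReal_univ, smul_eq_mul, one_mul]
    ring
  rw [e1, e0]
  ring

lemma integral_self_mul {Ω : Type*} [MeasurableSpace Ω] {μ : Measure Ω}
    [IsProbabilityMeasure μ] {X : Ω → ℝ} (hX : MemLp X 2 μ) (hm : ∫ ω, X ω ∂μ = 0) :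
    ∫ ω, X ω * X ω ∂μ = variance X μ := by
  rw [variance_eq_sub hX]
  simp only [Pi.pow_apply]
  rw [hm]
  simp [pow_two]

lemma integral_mul_comm' {Ω : Type*} [MeasurableSpace Ω] {μ : Measure Ω} (F G : Ω → ℝ) :
    ∫ ω, F ω * G ω ∂μ = ∫ ω, G ω * F ω ∂μ :=
  integral_congr_ae (Filter.Eventually.of_forall fun ω => mul_comm _ _)

/-- Non-exhaustive sampling variance formula: if `Y_{it} = b + a_i + g_t + w_{it}` with the
standard uncorrelated mean-zero two-way decomposition and `W ∈ {0,1}^{N×T}` is a fixed selection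
matrix with at least one `1`, then
`Var(Ȳ_{NT,W}) = (1/(NT p̄))·[T p̄ σ_a²·(1/N)∑_i (p_i/p̄)² + N p̄ σ_g²·(1/T)∑_t (p_t/p̄)² + σ_w²]`. -/
theorem stmt_17 {Ω : Type*} [MeasurableSpace Ω] (μ : Measure Ω) [IsProbabilityMeasure μ]
    (N T : ℕ) (hN : 0 < N) (hT : 0 < T) (b : ℝ)
    (a : Fin N → Ω → ℝ) (g : Fin T → Ω → ℝ) (w : Fin N → Fin T → Ω → ℝ)
    (σa σg σw : ℝ)
    (haL2 : ∀ i, MemLp (a i) 2 μ) (hgL2 : ∀ t, MemLp (g t) 2 μ)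
    (hwL2 : ∀ i t, MemLp (w i t) 2 μ)
    (hamean : ∀ i, ∫ ω, a i ω ∂μ = 0) (hgmean : ∀ t, ∫ ω, g t ω ∂μ = 0)
    (hwmean : ∀ i t, ∫ ω, w i t ω ∂μ = 0)
    (havar : ∀ i, variance (a i) μ = σa ^ 2)
    (hgvar : ∀ t, variance (g t) μ = σg ^ 2)
    (hwvar : ∀ i t, variance (w i t) μ = σw ^ 2)
    (haa : ∀ i j, i ≠ j → ∫ ω, a i ω * a j ω ∂μ = 0)
    (hgg : ∀ s t, s ≠ t → ∫ ω, g s ω * g t ω ∂μ = 0)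
    (hww : ∀ i t j s, (i, t) ≠ (j, s) → ∫ ω, w i t ω * w j s ω ∂μ = 0)
    (hag : ∀ i t, ∫ ω, a i ω * g t ω ∂μ = 0)
    (haw : ∀ j i t, ∫ ω, a j ω * w i t ω ∂μ = 0)
    (hgw : ∀ s i t, ∫ ω, g s ω * w i t ω ∂μ = 0)
    -- the fixed selection matrix and its row/column/grand inclusion frequencies
    (W : Fin N → Fin T → ℝ) (hW01 : ∀ i t, W i t = 0 ∨ W i t = 1)
    (hWpos : 0 < ∑ i, ∑ t, W i t)
    (pRow : Fin N → ℝ) (hpRow : ∀ i, pRow i = (1 / (T : ℝ)) * ∑ t, W i t)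
    (pCol : Fin T → ℝ) (hpCol : ∀ t, pCol t = (1 / (N : ℝ)) * ∑ i, W i t)
    (pBar : ℝ) (hpBar : pBar = (1 / (N * T : ℝ)) * ∑ i, ∑ t, W i t) :
    variance (fun ω => (∑ i, ∑ t, W i t)⁻¹ *
        ∑ i, ∑ t, W i t * (b + a i ω + g t ω + w i t ω)) μ
      = (1 / ((N : ℝ) * T * pBar)) *
          ((T : ℝ) * pBar * σa ^ 2 * ((1 / (N : ℝ)) * ∑ i, (pRow i / pBar) ^ 2) +
           (N : ℝ) * pBar * σg ^ 2 * ((1 / (T : ℝ)) * ∑ t, (pCol t / pBar) ^ 2) +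
           σw ^ 2) := by
  classical
  have hNpos : (0:ℝ) < N := by exact_mod_cast hN
  have hTpos : (0:ℝ) < T := by exact_mod_cast hT
  have hN0 : (N:ℝ) ≠ 0 := ne_of_gt hNpos
  have hT0 : (T:ℝ) ≠ 0 := ne_of_gt hTpos
  set S : ℝ := ∑ i, ∑ t, W i t with hSdef
  have hS0 : S ≠ 0 := ne_of_gt hWpos
  have hpBpos : 0 < pBar := by
    rw [hpBar]; exact mul_pos (by positivity) hWpos
  have hpB0 : pBar ≠ 0 := ne_of_gt hpBpos
  set c : (Fin N ⊕ (Fin T ⊕ Fin N × Fin T)) → ℝ :=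
    Sum.elim (fun i => S⁻¹ * ∑ t, W i t)
      (Sum.elim (fun t => S⁻¹ * ∑ i, W i t) (fun p => S⁻¹ * W p.1 p.2)) with hcdef
  set f : (Fin N ⊕ (Fin T ⊕ Fin N × Fin T)) → Ω → ℝ :=
    Sum.elim a (Sum.elim g (fun p => w p.1 p.2)) with hfdef
  set v : (Fin N ⊕ (Fin T ⊕ Fin N × Fin T)) → ℝ :=
    Sum.elim (fun _ => σa ^ 2) (Sum.elim (fun _ => σg ^ 2) (fun _ => σw ^ 2)) with hvdef
  have hfL2 : ∀ k, MemLp (f k) 2 μ := by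
    rintro (i | t | p)
    · exact haL2 i
    · exact hgL2 t
    · exact hwL2 p.1 p.2
  have hfmean : ∀ k, ∫ ω, f k ω ∂μ = 0 := by
    rintro (i | t | p)
    · exact hamean i
    · exact hgmean t
    · exact hwmean p.1 p.2
  set Z : Ω → ℝ := fun ω => ∑ k, c k * f k ω with hZdef
  have hZL2 : MemLp Z 2 μ :=
    memLp_finset_sum _ (fun k _ => (hfL2 k).const_mul (c k))
  -- the sampled mean equals b + Z pointwise
  have hfun : (fun ω => S⁻¹ * ∑ i, ∑ t, W i t * (b + a i ω + g t ω + w i t ω))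
      = fun ω => b + Z ω := by
    funext ω
    have expand : ∑ i, ∑ t, W i t * (b + a i ω + g t ω + w i t ω)
        = S * b + (∑ i, (∑ t, W i t) * a i ω) + (∑ t, (∑ i, W i t) * g t ω)
          + ∑ i, ∑ t, W i t * w i t ω := by
      have e1 : ∀ i : Fin N, ∀ t : Fin T,
          W i t * (b + a i ω + g t ω + w i t ω)
            = W i t * b + W i t * a i ω + W i t * g t ω + W i t * w i t ω := by
        intro i t; ring
      simp_rw [e1, Finset.sum_add_distrib]
      congr 1
      · congr 1
        · congr 1
          · rw [hSdef, Finset.sum_mul]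
            exact Finset.sum_congr rfl fun i _ => by rw [Finset.sum_mul]
          · exact Finset.sum_congr rfl fun i _ => by rw [← Finset.sum_mul]
        · rw [Finset.sum_comm]
          exact Finset.sum_congr rfl fun t _ => by rw [← Finset.sum_mul]
    rw [expand, hZdef]
    simp only [Fintype.sum_sum_type, Fintype.sum_prod_type, hcdef, hfdef,
      Sum.elim_inl, Sum.elim_inr]
    rw [mul_add, mul_add, mul_add, ← mul_assoc, inv_mul_cancel₀ hS0, one_mul]
    simp only [Finset.mul_sum, ← mul_assoc]
    ring
  rw [hfun, variance_const_add hZL2, variance_eq_sub hZL2]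
  simp only [Pi.pow_apply]
  -- mean of Z is zero
  have hZmean : ∫ ω, Z ω ∂μ = 0 := by
    rw [hZdef, integral_finset_sum _
      (fun k _ => ((hfL2 k).integrable one_le_two).const_mul _)]
    simp only [integral_const_mul]
    simp [hfmean]
  rw [hZmean]
  -- second moment
  have hint : ∫ ω, Z ω ^ 2 ∂μ = ∑ k, ∑ l, c k * c l * ∫ ω, f k ω * f l ω ∂μ := by
    simp only [hZdef, pow_two]
    exact integral_sum_mul_sum c c f f hfL2 hfL2
  rw [hint]
  -- the covariance matrix
  have hI : ∀ k l, ∫ ω, f k ω * f l ω ∂μ = if k = l then v k else 0 := by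
    rintro (i | t | ⟨i, t⟩) (j | s | ⟨j, s⟩) <;>
      simp only [hfdef, hvdef, Sum.elim_inl, Sum.elim_inr, Sum.inl.injEq, Sum.inr.injEq,
        Prod.mk.injEq, reduceIte]
    · by_cases h : i = j
      · subst h; rw [if_pos rfl, integral_self_mul (haL2 i) (hamean i), havar i]
      · rw [if_neg h]; exact haa i j h
    · exact hag i s
    · exact haw i j s
    · rw [integral_mul_comm']; exact hag j t
    · by_cases h : t = s
      · subst h; rw [if_pos rfl, integral_self_mul (hgL2 t) (hgmean t), hgvar t]
      · rw [if_neg h]; exact hgg t s h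
    · exact hgw t j s
    · rw [integral_mul_comm']; exact haw j i t
    · rw [integral_mul_comm']; exact hgw s i t
    · by_cases h : (i, t) = (j, s)
      · rw [Prod.mk.injEq] at h
        rw [if_pos h]
        obtain ⟨h1, h2⟩ := h; subst h1; subst h2
        rw [integral_self_mul (hwL2 i t) (hwmean i t), hwvar i t]
      · rw [Prod.mk.injEq] at h
        rw [if_neg h]
        exact hww i t j s (by rw [Ne, Prod.mk.injEq]; exact h)
  -- collapse the double sum
  have hdiag : ∑ k, ∑ l, c k * c l * ∫ ω, f k ω * f l ω ∂μ = ∑ k, c k ^ 2 * v k := by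
    simp_rw [hI, mul_ite, mul_zero]
    refine Finset.sum_congr rfl fun k _ => ?_
    rw [Finset.sum_ite_eq]
    simp [pow_two]
  rw [hdiag]
  -- split the sum over the three blocks
  rw [Fintype.sum_sum_type, Fintype.sum_sum_type, Fintype.sum_prod_type]
  simp only [hcdef, hvdef, Sum.elim_inl, Sum.elim_inr]
  -- identify with pRow, pCol, pBar
  have hWsq : ∀ i t, W i t ^ 2 = W i t := by
    intro i t; rcases hW01 i t with h | h <;> simp [h]
  have hR : ∀ i, (∑ t, W i t) = (T : ℝ) * pRow i := by
    intro i; rw [hpRow i]; field_simp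
  have hC : ∀ t, (∑ i, W i t) = (N : ℝ) * pCol t := by
    intro t; rw [hpCol t]; field_simp
  have hSp : S = (N : ℝ) * T * pBar := by
    rw [hpBar]; field_simp
  have hwblock : ∑ i : Fin N, ∑ t : Fin T, (S⁻¹ * W i t) ^ 2 * σw ^ 2
      = S⁻¹ ^ 2 * σw ^ 2 * S := by
    have e : ∀ i t, (S⁻¹ * W i t) ^ 2 * σw ^ 2 = S⁻¹ ^ 2 * σw ^ 2 * W i t := by
      intro i t; rw [mul_pow, hWsq i t]; ring
    simp_rw [e, ← Finset.mul_sum]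
    rw [hSdef]
  rw [hwblock]
  simp_rw [hR, hC]
  -- final algebra
  have hsum1 : ∑ i, (pRow i / pBar) ^ 2 = (∑ i, pRow i ^ 2) / pBar ^ 2 := by
    simp_rw [div_pow]; rw [← Finset.sum_div]
  have hsum2 : ∑ t, (pCol t / pBar) ^ 2 = (∑ t, pCol t ^ 2) / pBar ^ 2 := by
    simp_rw [div_pow]; rw [← Finset.sum_div]
  rw [hsum1, hsum2, hSp]
  have e1 : ∀ i, (((N : ℝ) * T * pBar)⁻¹ * ((T : ℝ) * pRow i)) ^ 2 * σa ^ 2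
      = (((N : ℝ) * T * pBar)⁻¹ ^ 2 * (T : ℝ) ^ 2 * σa ^ 2) * pRow i ^ 2 := by
    intro i; ring
  have e2 : ∀ t, (((N : ℝ) * T * pBar)⁻¹ * ((N : ℝ) * pCol t)) ^ 2 * σg ^ 2
      = (((N : ℝ) * T * pBar)⁻¹ ^ 2 * (N : ℝ) ^ 2 * σg ^ 2) * pCol t ^ 2 := by
    intro t; ring
  simp_rw [e1, e2, ← Finset.mul_sum]
  field_simp
  ring
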